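/- In a finite directed graph G with a distinguished root vertex s, if every vertex is reachable from s, then every vertex x ≠ s has a unique immediate dominator: a vertex v ≠ x that dominates x (i.e., every path from s to x passes through v) and is dominated by every other dominator w ≠ x of x. -/

import Mathlib

/-- `p` is a directed walk from `a` to `b` in the graph with adjacency `adj`. -/
def IsWalk {V : Type*} (adj : V → V → Prop) (a b : V) (p : List V) : Prop :=
  p.head? = some a ∧ p.getLast? = some b ∧ p.Chain' adj

/-- `b` is reachable from `a`. -/
def Reaches {V : Type*} (adj : V → V → Prop) (a b : V) : Prop :=
  ∃ p, IsWalk adj a b p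

/-- `u` dominates `x` (w.r.t. root `s`): every walk from `s` to `x` contains `u`. -/
def Dom {V : Type*} (adj : V → V → Prop) (s u x : V) : Prop :=
  ∀ p, IsWalk adj s x p → u ∈ p

/-- Split a list at the last element satisfying `P`. -/
lemma last_sat {α : Type*} (P : α → Prop) :
    ∀ l : List α, (∃ a ∈ l, P a) →
      ∃ l₁ a l₂, l = l₁ ++ a :: l₂ ∧ P a ∧ ∀ b ∈ l₂, ¬ P b := by
  intro l
  induction l with
  | nil => rintro ⟨a, h, -⟩; cases h
  | cons c t ih =>
    rintro ⟨a, ha, hPa⟩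
    by_cases ht : ∃ b ∈ t, P b
    · obtain ⟨l₁, b, l₂, rfl, hPb, hlast⟩ := ih ht
      exact ⟨c :: l₁, b, l₂, rfl, hPb, hlast⟩
    · refine ⟨[], c, t, rfl, ?_, fun b hb hPb => ht ⟨b, hb, hPb⟩⟩
      rcases List.mem_cons.mp ha with rfl | h
      · exact hPa
      · exact absurd ⟨a, h, hPa⟩ ht

lemma walk_nonempty {V : Type*} {adj : V → V → Prop} {a b : V} {p : List V}
    (h : IsWalk adj a b p) : p ≠ [] := by
  rintro rfl; simp [IsWalk] at h

lemma head_mem_walk {V : Type*} {adj : V → V → Prop} {a b : V} {p : List V}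
    (h : IsWalk adj a b p) : a ∈ p := by
  obtain ⟨h1, -, -⟩ := h
  cases p with
  | nil => simp at h1
  | cons c t => simp_all

/-- A prefix of a walk, cut at an occurrence of `a`, is a walk to `a`. -/
lemma walk_prefix {V : Type*} {adj : V → V → Prop} {s x a : V} {l₁ l₂ : List V}
    (h : IsWalk adj s x (l₁ ++ a :: l₂)) : IsWalk adj s a (l₁ ++ [a]) := by
  obtain ⟨h1, -, h3⟩ := h
  have hre : l₁ ++ a :: l₂ = (l₁ ++ [a]) ++ l₂ := by simp
  rw [hre] at h1 h3
  refine ⟨?_, List.getLast?_concat, (List.isChain_append.mp h3).1⟩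
  rwa [List.head?_append_of_ne_nil _ (by simp)] at h1

/-- Splicing a walk to `v` with the part of a walk after an occurrence of `v`. -/
lemma walk_splice {V : Type*} {adj : V → V → Prop} {s v x : V} {q l₁ l₂ : List V}
    (hq : IsWalk adj s v q) (hp : IsWalk adj s x (l₁ ++ v :: l₂)) (hl₂ : l₂ ≠ []) :
    IsWalk adj s x (q ++ l₂) := by
  obtain ⟨hq1, hq2, hq3⟩ := hq
  obtain ⟨-, hp2, hp3⟩ := hp
  have hc := List.isChain_append.mp hp3
  refine ⟨?_, ?_, ?_⟩
  · rw [List.head?_append_of_ne_nil _ (by rintro rfl; simp at hq1)]; exact hq1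
  · rw [List.getLast?_append_of_ne_nil _ hl₂]
    rw [List.getLast?_append_cons] at hp2
    rwa [show v :: l₂ = [v] ++ l₂ from rfl, List.getLast?_append_of_ne_nil _ hl₂] at hp2
  · refine List.isChain_append.mpr ⟨hq3, hc.2.1.tail, ?_⟩
    intro y hy z hz
    rw [hq2] at hy
    cases hy
    cases l₂ with
    | nil => simp at hz
    | cons h t =>
      cases hz
      exact (List.isChain_cons_cons.mp hc.2.1).1

/-- No two distinct vertices can mutually dominate each other. -/
lemma no_mutual_dom {V : Type*} {adj : V → V → Prop} {s v v' : V}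
    (hne : v ≠ v') (h1 : Dom adj s v' v) (h2 : Dom adj s v v')
    (hr : Reaches adj s v) : False := by
  obtain ⟨p, hp⟩ := hr
  obtain ⟨n, ⟨q, hq, rfl⟩, hmin⟩ :=
    (Nat.lt_wfRel.wf).has_min {n | ∃ q, IsWalk adj s v q ∧ q.length = n}
      ⟨p.length, p, hp, rfl⟩
  have hv' : v' ∈ q := h1 q hq
  obtain ⟨q₁, q₂, rfl⟩ := List.append_of_mem hv'
  have hw1 : IsWalk adj s v' (q₁ ++ [v']) := walk_prefix hq
  have hv : v ∈ q₁ ++ [v'] := h2 _ hw1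
  have hvq₁ : v ∈ q₁ := by
    rcases List.mem_append.mp hv with h | h
    · exact h
    · simp at h; exact absurd h hne
  obtain ⟨r₁, r₂, rfl⟩ := List.append_of_mem hvq₁
  have hw2 : IsWalk adj s v (r₁ ++ [v]) := by
    have : (r₁ ++ v :: r₂) ++ v' :: q₂ = r₁ ++ v :: (r₂ ++ v' :: q₂) := by simp
    rw [this] at hq
    exact walk_prefix hq
  refine hmin _ ⟨_, hw2, rfl⟩ ?_
  show (r₁ ++ [v]).length < ((r₁ ++ v :: r₂) ++ v' :: q₂).length
  simp

/-- Every vertex `x ≠ s` of a finite rooted digraph, all of whose vertices are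
reachable from `s`, has a unique immediate dominator. -/
theorem stmt0 {V : Type*} [Fintype V] (adj : V → V → Prop) (s : V)
    (hreach : ∀ x : V, Reaches adj s x) :
    ∀ x : V, x ≠ s →
      ∃! v : V, v ≠ x ∧ Dom adj s v x ∧
        ∀ w : V, w ≠ x → w ≠ v → Dom adj s w x → Dom adj s w v := by
  intro x hxs
  obtain ⟨p, hp⟩ := hreach x
  -- `s` is a dominator of `x` distinct from `x`
  have hsdom : Dom adj s s x := fun q hq => head_mem_walk hq
  have hsp : ∃ a ∈ p, a ≠ x ∧ Dom adj s a x :=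
    ⟨s, head_mem_walk hp, Ne.symm hxs, hsdom⟩
  obtain ⟨l₁, v, l₂, hsplit, ⟨hvx, hvdom⟩, hlast⟩ :=
    last_sat (fun a => a ≠ x ∧ Dom adj s a x) p hsp
  rw [hsplit] at hp
  -- the tail after `v` is nonempty since `v ≠ x`
  have hl₂ : l₂ ≠ [] := by
    rintro rfl
    obtain ⟨-, h2, -⟩ := hp
    rw [List.getLast?_concat] at h2
    exact hvx (by injection h2)
  have hvimm : ∀ w : V, w ≠ x → w ≠ v → Dom adj s w x → Dom adj s w v := by
    intro w hwx hwv hwdom q hq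
    have hmem : w ∈ q ++ l₂ := hwdom _ (walk_splice hq hp hl₂)
    rcases List.mem_append.mp hmem with h | h
    · exact h
    · exact absurd ⟨hwx, hwdom⟩ (hlast w h)
  refine ⟨v, ⟨hvx, hvdom, hvimm⟩, ?_⟩
  rintro v' ⟨hv'x, hv'dom, hv'imm⟩
  by_contra hne
  exact no_mutual_dom (Ne.symm hne) (hvimm v' hv'x hne hv'dom)
    (hv'imm v hvx (Ne.symm hne) hvdom) (hreach v)
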